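/- For the planar vector field F(x,y) = (-y, x), the function u(x,y) = -a b x^2 + (a^2 - b^2) x y + a b y^2 + g(-b x + a y), where a, b are real constants with a^2 + b^2 = 1 and g is a C^2 function, satisfies the p-minimal surface equation div((∇u + F)/|∇u + F|) = 0 at every point where ∇u + F ≠ 0. -/

import Mathlib

open Real

/-- If `f` is continuous at `p` and nonzero there, then `t ↦ c * f t / √((f t)^2)`
is locally constant at `p`, hence has zero derivative. -/
lemma aux_deriv_sign (c : ℝ) (f : ℝ → ℝ) (p : ℝ) (hf : ContinuousAt f p) (hfp : f p ≠ 0) :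
    deriv (fun t => c * f t / Real.sqrt (f t ^ 2)) p = 0 := by
  rcases hfp.lt_or_gt with hc | hc
  · have heq : (fun t => c * f t / Real.sqrt (f t ^ 2)) =ᶠ[nhds p] fun _ => -c := by
      filter_upwards [hf.preimage_mem_nhds (Iio_mem_nhds hc)] with t ht
      have ht' : f t < 0 := ht
      have hs : Real.sqrt (f t ^ 2) = -f t := by
        rw [Real.sqrt_sq_eq_abs, abs_of_neg ht']
      rw [hs, div_neg, mul_div_assoc, div_self ht'.ne, mul_one]
    rw [heq.deriv_eq, deriv_const]
  · have heq : (fun t => c * f t / Real.sqrt (f t ^ 2)) =ᶠ[nhds p] fun _ => c := by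
      filter_upwards [hf.preimage_mem_nhds (Ioi_mem_nhds hc)] with t ht
      have ht' : 0 < f t := ht
      have hs : Real.sqrt (f t ^ 2) = f t := by
        rw [Real.sqrt_sq_eq_abs, abs_of_pos ht']
      rw [hs, mul_div_assoc, div_self ht'.ne', mul_one]
    rw [heq.deriv_eq, deriv_const]

/-- The p-minimal surface equation for `u(x,y) = -abx² + (a²-b²)xy + aby² + g(-bx+ay)`:
`div((∇u + F)/|∇u + F|) = 0` wherever `∇u + F ≠ 0`, with `F(x,y) = (-y, x)`. -/
theorem pmin_graph_family_one (a b : ℝ) (hab : a ^ 2 + b ^ 2 = 1)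
    (g : ℝ → ℝ) (hg : ContDiff ℝ 2 g)
    (u : ℝ → ℝ → ℝ)
    (hu : ∀ x y, u x y =
      -a * b * x ^ 2 + (a ^ 2 - b ^ 2) * x * y + a * b * y ^ 2 + g (-b * x + a * y))
    (W₁ W₂ : ℝ → ℝ → ℝ)
    (hW₁ : ∀ x y, W₁ x y = deriv (fun x' => u x' y) x + (-y))
    (hW₂ : ∀ x y, W₂ x y = deriv (fun y' => u x y') y + x)
    (x y : ℝ) (hne : (W₁ x y, W₂ x y) ≠ (0, 0)) :
    deriv (fun x' => W₁ x' y / Real.sqrt ((W₁ x' y) ^ 2 + (W₂ x' y) ^ 2)) x +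
      deriv (fun y' => W₂ x y' / Real.sqrt ((W₁ x y') ^ 2 + (W₂ x y') ^ 2)) y = 0 := by
  have hgd : Differentiable ℝ g := hg.differentiable two_ne_zero
  have hg' : Continuous (deriv g) := hg.continuous_deriv one_le_two
  set h : ℝ → ℝ → ℝ := fun x y => 2 * a * x + 2 * b * y + deriv g (-b * x + a * y) with hh
  -- derivative in x
  have hdx : ∀ x y, deriv (fun x' => u x' y) x
      = -2 * a * b * x + (a ^ 2 - b ^ 2) * y + deriv g (-b * x + a * y) * (-b) := by
    intro x y
    have h1 : HasDerivAt (fun x' : ℝ => -b * x' + a * y) (-b) x := by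
      simpa using ((hasDerivAt_id x).const_mul (-b)).add_const (a * y)
    have h2 : HasDerivAt (fun x' => g (-b * x' + a * y)) (deriv g (-b * x + a * y) * (-b)) x :=
      (hgd (-b * x + a * y)).hasDerivAt.comp x h1
    have h3 : HasDerivAt (fun x' : ℝ =>
        -a * b * x' ^ 2 + (a ^ 2 - b ^ 2) * x' * y + a * b * y ^ 2 + g (-b * x' + a * y))
        (-2 * a * b * x + (a ^ 2 - b ^ 2) * y + deriv g (-b * x + a * y) * (-b)) x := by
      have hp : HasDerivAt (fun x' : ℝ =>
          -a * b * x' ^ 2 + (a ^ 2 - b ^ 2) * x' * y + a * b * y ^ 2)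
          (-2 * a * b * x + (a ^ 2 - b ^ 2) * y) x := by
        have := (((hasDerivAt_pow 2 x).const_mul (-a * b)).add
          (((hasDerivAt_id x).const_mul ((a ^ 2 - b ^ 2))).mul_const y)).add_const (a * b * y ^ 2)
        refine this.congr_deriv ?_
        ring
      exact hp.add h2
    have : (fun x' => u x' y) = fun x' =>
        -a * b * x' ^ 2 + (a ^ 2 - b ^ 2) * x' * y + a * b * y ^ 2 + g (-b * x' + a * y) := by
      funext x'; exact hu x' y
    rw [this, h3.deriv]
  -- derivative in y
  have hdy : ∀ x y, deriv (fun y' => u x y') y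
      = (a ^ 2 - b ^ 2) * x + 2 * a * b * y + deriv g (-b * x + a * y) * a := by
    intro x y
    have h1 : HasDerivAt (fun y' : ℝ => -b * x + a * y') a y := by
      simpa using (((hasDerivAt_id y).const_mul a).const_add (-b * x))
    have h2 : HasDerivAt (fun y' => g (-b * x + a * y')) (deriv g (-b * x + a * y) * a) y :=
      (hgd (-b * x + a * y)).hasDerivAt.comp y h1
    have h3 : HasDerivAt (fun y' : ℝ =>
        -a * b * x ^ 2 + (a ^ 2 - b ^ 2) * x * y' + a * b * y' ^ 2 + g (-b * x + a * y'))
        ((a ^ 2 - b ^ 2) * x + 2 * a * b * y + deriv g (-b * x + a * y) * a) y := by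
      have hp : HasDerivAt (fun y' : ℝ =>
          -a * b * x ^ 2 + (a ^ 2 - b ^ 2) * x * y' + a * b * y' ^ 2)
          ((a ^ 2 - b ^ 2) * x + 2 * a * b * y) y := by
        have := ((((hasDerivAt_id y).const_mul ((a ^ 2 - b ^ 2) * x)).const_add
          (-a * b * x ^ 2)).add ((hasDerivAt_pow 2 y).const_mul (a * b)))
        exact this.congr_deriv (by ring)
      exact hp.add h2
    have : (fun y' => u x y') = fun y' =>
        -a * b * x ^ 2 + (a ^ 2 - b ^ 2) * x * y' + a * b * y' ^ 2 + g (-b * x + a * y') := by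
      funext y'; exact hu x y'
    rw [this, h3.deriv]
  have hW1' : ∀ x y, W₁ x y = -b * h x y := by
    intro x y
    rw [hW₁ x y, hdx x y, hh]
    linear_combination y * hab
  have hW2' : ∀ x y, W₂ x y = a * h x y := by
    intro x y
    rw [hW₂ x y, hdy x y, hh]
    linear_combination (-x) * hab
  have hkey : ∀ x y, (W₁ x y) ^ 2 + (W₂ x y) ^ 2 = (h x y) ^ 2 := by
    intro x y
    rw [hW1', hW2']
    linear_combination (h x y) ^ 2 * hab
  have hne' : h x y ≠ 0 := by
    intro h0
    apply hne
    rw [hW1', hW2', h0]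
    simp
  have hcont : Continuous (deriv g) := hg'
  have hcx : ContinuousAt (fun x' => h x' y) x := by
    apply Continuous.continuousAt
    apply Continuous.add
    · fun_prop
    · exact hcont.comp (by fun_prop)
  have hcy : ContinuousAt (fun y' => h x y') y := by
    apply Continuous.continuousAt
    apply Continuous.add
    · fun_prop
    · exact hcont.comp (by fun_prop)
  have e1 : (fun x' => W₁ x' y / Real.sqrt ((W₁ x' y) ^ 2 + (W₂ x' y) ^ 2))
      = fun x' => -b * h x' y / Real.sqrt ((h x' y) ^ 2) := by
    funext x'
    rw [hkey, hW1']
  have e2 : (fun y' => W₂ x y' / Real.sqrt ((W₁ x y') ^ 2 + (W₂ x y') ^ 2))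
      = fun y' => a * h x y' / Real.sqrt ((h x y') ^ 2) := by
    funext y'
    rw [hkey, hW2']
  rw [e1, e2, aux_deriv_sign (-b) (fun x' => h x' y) x hcx hne',
    aux_deriv_sign a (fun y' => h x y') y hcy hne', add_zero]
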